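/- Fix q with 1 < q < 2, let p = q/(q-1) be the conjugate exponent, and fix a relaxation interval ε = [ε₋, ε₊] with 0 < ε₋ ≤ ε₊ < ∞. Then for every t ≥ 0 the convex conjugate κ_ε(t) := sup_{r ≥ 0} (r·t - κ*_ε(r)) is given by: κ_ε(t) = (1/2)ε₋^{2-q} t² - (1/q - 1/2)ε₋^q if t^p ≤ ε₋^q; κ_ε(t) = (1/p) t^p if ε₋^q ≤ t^p ≤ ε₊^q; and κ_ε(t) = (1/2)ε₊^{2-q} t² - (1/q - 1/2)ε₊^q if ε₊^q ≤ t^p. -/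

import Mathlib

open Real

/-- The relaxed integrand `κ*_ε`. -/
noncomputable def kappaStar (q em ep t : ℝ) : ℝ :=
  if t ≤ em then (1/2) * em ^ (q-2) * t^2 + (1/q - 1/2) * em ^ q
  else if t ≤ ep then (1/q) * t ^ q
  else (1/2) * ep ^ (q-2) * t^2 + (1/q - 1/2) * ep ^ q

/-- Convex tangent: for `1 ≤ q`, `0 < a`, `0 ≤ r`: `a^q + q a^{q-1}(r-a) ≤ r^q`. -/
lemma aux_tangent_pow {q a r : ℝ} (hq : 1 ≤ q) (ha : 0 < a) (hr : 0 ≤ r) :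
    a ^ q + q * a ^ (q-1) * (r - a) ≤ r ^ q := by
  have hs : (-1:ℝ) ≤ r / a - 1 := by
    have : 0 ≤ r / a := div_nonneg hr ha.le
    linarith
  have hb := one_add_mul_self_le_rpow_one_add hs hq
  rw [show 1 + (r/a - 1) = r/a by ring, Real.div_rpow hr ha.le] at hb
  have haq : (0:ℝ) < a ^ q := rpow_pos_of_pos ha q
  have hb2 := mul_le_mul_of_nonneg_right hb haq.le
  rw [div_mul_cancel₀ _ haq.ne'] at hb2
  have e1 : a ^ (q-1) * a = a ^ q := by
    rw [← Real.rpow_add_one ha.ne']; norm_num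
  have e2 : a ^ (q-1) * a ^ q / a ^ q = a ^ (q-1) := by field_simp
  calc a ^ q + q * a ^ (q-1) * (r - a)
      = (1 + q * (r/a - 1)) * a ^ q := by
        field_simp
        linear_combination (q*r - q*a) * e1
    _ ≤ r ^ q := hb2

/-- Tangent bound for `g(r) = r t - (1/q) r^q`. -/
lemma aux_tangent {q a r t : ℝ} (hq : 1 < q) (ha : 0 < a) (hr : 0 ≤ r) :
    r * t - (1/q) * r ^ q ≤ a * t - (1/q) * a ^ q + (r - a) * (t - a ^ (q-1)) := by
  have hq0 : (0:ℝ) < q := by linarith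
  have h := aux_tangent_pow hq.le ha hr
  have h2 := mul_le_mul_of_nonneg_left h (by positivity : (0:ℝ) ≤ 1/q)
  have e : (1/q) * (a ^ q + q * a ^ (q-1) * (r - a))
      = (1/q) * a ^ q + a ^ (q-1) * (r - a) := by
    field_simp
  rw [e] at h2
  nlinarith [h2]

/-- The quadratic relaxation dominates the power: `(1/q) r^q ≤ (1/2) a^{q-2} r² + (1/q - 1/2) a^q`. -/
lemma aux_quad_ge_pow {q a r : ℝ} (hq0 : 0 < q) (hq2 : q ≤ 2) (ha : 0 < a) (hr : 0 ≤ r) :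
    (1/q) * r ^ q ≤ (1/2) * a ^ (q-2) * r^2 + (1/q - 1/2) * a ^ q := by
  have hs : (-1:ℝ) ≤ r^2 / a^2 - 1 := by
    have : (0:ℝ) ≤ r^2 / a^2 := by positivity
    linarith
  have hb := rpow_one_add_le_one_add_mul_self hs (by linarith : (0:ℝ) ≤ q/2) (by linarith : q/2 ≤ 1)
  rw [show 1 + (r^2/a^2 - 1) = r^2/a^2 by ring] at hb
  have hx : (r^2/a^2 : ℝ) ^ (q/2) = r ^ q / a ^ q := by
    rw [Real.div_rpow (by positivity) (by positivity), ← Real.rpow_natCast r 2,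
      ← Real.rpow_natCast a 2, ← Real.rpow_mul hr, ← Real.rpow_mul ha.le]
    norm_num
    rw [show (2:ℝ) * (q/2) = q by ring]
  rw [hx] at hb
  have haq : (0:ℝ) < a ^ q := rpow_pos_of_pos ha q
  have hb2 := mul_le_mul_of_nonneg_right hb haq.le
  rw [div_mul_cancel₀ _ haq.ne'] at hb2
  -- hb2 : r ^ q ≤ (1 + q/2 * (r^2/a^2 - 1)) * a^q
  have e1 : a ^ (q-2) * a ^ 2 = a ^ q := by
    rw [← Real.rpow_natCast a 2, ← Real.rpow_add ha]; norm_num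
  have hb3 : r ^ q ≤ a ^ q + (q/2) * (a ^ (q-2) * r^2 - a ^ q) := by
    have ha2 : (a:ℝ)^2 ≠ 0 := by positivity
    calc r ^ q ≤ (1 + q/2 * (r^2/a^2 - 1)) * a ^ q := hb2
      _ = a ^ q + (q/2) * (a ^ (q-2) * r^2 - a ^ q) := by
          field_simp
          linear_combination (-q*r^2) * e1
  have h4 := mul_le_mul_of_nonneg_left hb3 (by positivity : (0:ℝ) ≤ 1/q)
  calc (1/q) * r ^ q ≤ (1/q) * (a ^ q + (q/2) * (a ^ (q-2) * r^2 - a ^ q)) := h4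
    _ = (1/2) * a ^ (q-2) * r^2 + (1/q - 1/2) * a ^ q := by field_simp; ring

/-- Completing the square: `r t - ((1/2) a^{q-2} r² + c) ≤ (1/2) a^{2-q} t² - c`. -/
lemma aux_square {q a r t c : ℝ} (ha : 0 < a) :
    r * t - ((1/2) * a ^ (q-2) * r^2 + c) ≤ (1/2) * a ^ (2-q) * t^2 - c := by
  have hu : (0:ℝ) < a ^ (q-2) := rpow_pos_of_pos ha _
  have huv : a ^ (q-2) * a ^ (2-q) = 1 := by
    rw [← Real.rpow_add ha]; norm_num
  have h2 : a ^ (q-2) * (a ^ (2-q))^2 = a ^ (2-q) := by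
    rw [sq, ← mul_assoc, huv, one_mul]
  have e : a ^ (q-2) * (r - a ^ (2-q) * t)^2
      = a ^ (q-2) * r^2 - 2*(r*t) + a ^ (2-q) * t^2 := by
    linear_combination (-2*r*t) * huv + (t^2) * h2
  have h3 := mul_nonneg hu.le (sq_nonneg (r - a ^ (2-q) * t))
  rw [e] at h3
  linarith

/-- `g(a) ≤ (1/2) a^{2-q} t² - (1/q - 1/2) a^q`. -/
lemma aux_g_le_quad {q a t : ℝ} (hq : 1 < q) (ha : 0 < a) :
    a * t - (1/q) * a ^ q ≤ (1/2) * a ^ (2-q) * t^2 - (1/q - 1/2) * a ^ q := by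
  have hw : (0:ℝ) < a ^ (2-q) := rpow_pos_of_pos ha _
  have e1 : a ^ (2-q) * a ^ (q-1) = a := by
    rw [← Real.rpow_add ha]; norm_num
  have e2 : a * a ^ (q-1) = a ^ q := by
    rw [mul_comm, ← Real.rpow_add_one ha.ne']; norm_num
  have e3 : a ^ (2-q) * (t - a ^ (q-1))^2 = a ^ (2-q) * t^2 - 2*(a*t) + a ^ q := by
    linear_combination (-2*t + a ^ (q-1)) * e1 + e2
  have h3 := mul_nonneg hw.le (sq_nonneg (t - a ^ (q-1)))
  rw [e3] at h3
  linarith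

/-- convex conjugate of the relaxed integrand. For `1 < q < 2`,
`p = q/(q-1)` and `0 < ε₋ ≤ ε₊ < ∞`, the convex conjugate
`κ_ε(t) = sup_{r ≥ 0} (r t - κ*_ε(r))` equals, for `t ≥ 0`:
`(1/2) ε₋^(2-q) t² - (1/q - 1/2) ε₋^q` if `t^p ≤ ε₋^q`,
`(1/p) t^p` if `ε₋^q ≤ t^p ≤ ε₊^q`, and
`(1/2) ε₊^(2-q) t² - (1/q - 1/2) ε₊^q` if `ε₊^q ≤ t^p`. -/
theorem stmt15 (q em ep p : ℝ) (hq1 : 1 < q) (hq2 : q < 2) (hem : 0 < em) (hemep : em ≤ ep)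
    (hp : p = q / (q - 1)) (t : ℝ) (ht : 0 ≤ t) :
    sSup ((fun r => r * t - kappaStar q em ep r) '' Set.Ici (0 : ℝ)) =
      if t ^ p ≤ em ^ q then (1/2) * em ^ (2-q) * t^2 - (1/q - 1/2) * em ^ q
      else if t ^ p ≤ ep ^ q then (1/p) * t ^ p
      else (1/2) * ep ^ (2-q) * t^2 - (1/q - 1/2) * ep ^ q := by
  have hq0 : (0:ℝ) < q := by linarith
  have hq1' : (0:ℝ) < q - 1 := by linarith
  have hep : (0:ℝ) < ep := lt_of_lt_of_le hem hemep
  have hp1 : 1 < p := by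
    rw [hp, lt_div_iff₀ hq1']; linarith
  have hp0 : (0:ℝ) < p := by linarith
  have hp1' : (0:ℝ) < p - 1 := by linarith
  have hqp : (q-1) * p = q := by rw [hp]; field_simp
  have hqp1 : (q-1) * (p-1) = 1 := by rw [hp]; field_simp; ring
  have hpq1 : (p-1) * (q-1) = 1 := by rw [hp]; field_simp; ring
  have hpq2 : (p-1) * q = p := by rw [hp]; field_simp; ring
  have h1p : (1:ℝ)/p = 1 - 1/q := by rw [hp]; field_simp
  -- conversions between conditions on t^p and on t
  have hconv : ∀ a : ℝ, 0 < a → (t ^ p ≤ a ^ q ↔ t ≤ a ^ (q-1)) := by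
    intro a ha
    constructor
    · intro h
      by_contra hc
      push_neg at hc
      have := Real.rpow_lt_rpow (Real.rpow_nonneg ha.le _) hc hp0
      rw [← Real.rpow_mul ha.le, hqp] at this
      linarith
    · intro h
      have := Real.rpow_le_rpow ht h hp0.le
      rwa [← Real.rpow_mul ha.le, hqp] at this
  split_ifs with h1 h2
  · -- case 1 : t ≤ em^(q-1)
    have htm : t ≤ em ^ (q-1) := (hconv em hem).1 h1
    apply IsGreatest.csSup_eq
    constructor
    · refine ⟨em ^ (2-q) * t, Set.mem_Ici.2 (by positivity), ?_⟩
      have hbr : em ^ (2-q) * t ≤ em := by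
        calc em ^ (2-q) * t ≤ em ^ (2-q) * em ^ (q-1) :=
              mul_le_mul_of_nonneg_left htm (by positivity)
          _ = em := by rw [← Real.rpow_add hem]; norm_num
      show em ^ (2-q) * t * t - kappaStar q em ep (em ^ (2-q) * t) = _
      rw [kappaStar, if_pos hbr]
      have e : em ^ (q-2) * em ^ (2-q) = 1 := by rw [← Real.rpow_add hem]; norm_num
      linear_combination (-(1/2)*t^2*em^(2-q)) * e
    · rintro y ⟨r, hr, rfl⟩
      have hr : (0:ℝ) ≤ r := hr
      show r * t - kappaStar q em ep r ≤ _
      rw [kappaStar]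
      split_ifs with hb1 hb2
      · exact aux_square hem
      · have hme : em ≤ r := le_of_not_ge hb1
        have htan := aux_tangent (a := em) (t := t) hq1 hem hr
        have hprod : (r - em) * (t - em ^ (q-1)) ≤ 0 :=
          mul_nonpos_of_nonneg_of_nonpos (by linarith) (by linarith)
        have hgq := aux_g_le_quad (a := em) (t := t) hq1 hem
        linarith
      · have hme : em ≤ r := le_of_not_ge hb1
        have hk := aux_quad_ge_pow (a := ep) hq0 hq2.le hep hr
        have htan := aux_tangent (a := em) (t := t) hq1 hem hr
        have hprod : (r - em) * (t - em ^ (q-1)) ≤ 0 :=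
          mul_nonpos_of_nonneg_of_nonpos (by linarith) (by linarith)
        have hgq := aux_g_le_quad (a := em) (t := t) hq1 hem
        linarith
  · -- case 2 : em^(q-1) < t ≤ ep^(q-1)
    have htm : em ^ (q-1) < t := by
      by_contra hc
      push_neg at hc
      exact h1 ((hconv em hem).2 hc)
    have htp : t ≤ ep ^ (q-1) := (hconv ep hep).1 h2
    have ht0 : (0:ℝ) < t := lt_of_le_of_lt (Real.rpow_nonneg hem.le _) htm
    have hr0 : (0:ℝ) < t ^ (p-1) := Real.rpow_pos_of_pos ht0 _
    have e1 : t ^ (p-1) * t = t ^ p := by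
      rw [← Real.rpow_add_one ht0.ne']; norm_num
    have e2 : (t ^ (p-1)) ^ q = t ^ p := by
      rw [← Real.rpow_mul ht0.le, hpq2]
    have e3 : (t ^ (p-1)) ^ (q-1) = t := by
      rw [← Real.rpow_mul ht0.le, hpq1, Real.rpow_one]
    have hVeq : (1/p) * t ^ p = t ^ p - (1/q) * t ^ p := by rw [h1p]; ring
    apply IsGreatest.csSup_eq
    constructor
    · refine ⟨t ^ (p-1), Set.mem_Ici.2 hr0.le, ?_⟩
      have hm : em < t ^ (p-1) := by
        have := Real.rpow_lt_rpow (Real.rpow_nonneg hem.le _) htm hp1'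
        rwa [← Real.rpow_mul hem.le, hqp1, Real.rpow_one] at this
      have hpe : t ^ (p-1) ≤ ep := by
        have := Real.rpow_le_rpow ht htp hp1'.le
        rwa [← Real.rpow_mul hep.le, hqp1, Real.rpow_one] at this
      show t ^ (p-1) * t - kappaStar q em ep (t ^ (p-1)) = _
      rw [kappaStar, if_neg (not_le.2 hm), if_pos hpe, e1, e2]
      linarith [hVeq]
    · rintro y ⟨r, hr, rfl⟩
      have hr : (0:ℝ) ≤ r := hr
      have htan := aux_tangent (a := t ^ (p-1)) (t := t) hq1 hr0 hr
      rw [e3, sub_self, mul_zero, add_zero, e1, e2] at htan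
      have hgle : r * t - (1/q) * r ^ q ≤ (1/p) * t ^ p := by linarith
      show r * t - kappaStar q em ep r ≤ _
      rw [kappaStar]
      split_ifs with hb1 hb2
      · linarith [aux_quad_ge_pow (a := em) hq0 hq2.le hem hr]
      · exact hgle
      · linarith [aux_quad_ge_pow (a := ep) hq0 hq2.le hep hr]
  · -- case 3 : ep^(q-1) < t
    have htm : ep ^ (q-1) < t := by
      by_contra hc
      push_neg at hc
      exact h2 ((hconv ep hep).2 hc)
    apply IsGreatest.csSup_eq
    constructor
    · refine ⟨ep ^ (2-q) * t, Set.mem_Ici.2 (by positivity), ?_⟩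
      have hgt : ep < ep ^ (2-q) * t := by
        calc ep = ep ^ (2-q) * ep ^ (q-1) := by rw [← Real.rpow_add hep]; norm_num
          _ < ep ^ (2-q) * t := by
              exact mul_lt_mul_of_pos_left htm (by positivity)
      show ep ^ (2-q) * t * t - kappaStar q em ep (ep ^ (2-q) * t) = _
      rw [kappaStar, if_neg (not_le.2 (lt_of_le_of_lt hemep hgt)), if_neg (not_le.2 hgt)]
      have e : ep ^ (q-2) * ep ^ (2-q) = 1 := by rw [← Real.rpow_add hep]; norm_num
      linear_combination (-(1/2)*t^2*ep^(2-q)) * e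
    · rintro y ⟨r, hr, rfl⟩
      have hr : (0:ℝ) ≤ r := hr
      show r * t - kappaStar q em ep r ≤ _
      rw [kappaStar]
      split_ifs with hb1 hb2
      · have hre : r ≤ ep := le_trans hb1 hemep
        have hk := aux_quad_ge_pow (a := em) hq0 hq2.le hem hr
        have htan := aux_tangent (a := ep) (t := t) hq1 hep hr
        have hprod : (r - ep) * (t - ep ^ (q-1)) ≤ 0 :=
          mul_nonpos_of_nonpos_of_nonneg (by linarith) (by linarith)
        have hgq := aux_g_le_quad (a := ep) (t := t) hq1 hep
        linarith
      · have htan := aux_tangent (a := ep) (t := t) hq1 hep hr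
        have hprod : (r - ep) * (t - ep ^ (q-1)) ≤ 0 :=
          mul_nonpos_of_nonpos_of_nonneg (by linarith) (by linarith)
        have hgq := aux_g_le_quad (a := ep) (t := t) hq1 hep
        linarith
      · exact aux_square hep
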